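/- The density function φ of the Lax-curve parametrisation is twice continuously differentiable at the base pressure: let γ > 1, ρ_k > 0, p_k > 0 and μ² = (γ−1)/(γ+1), and define φ : (0, ∞) → ℝ by φ(σ) = ρ_k·(σ/p_k)^(1/γ) for σ ≤ p_k and φ(σ) = ρ_k·(σ + μ²p_k)/(μ²σ + p_k) for σ > p_k. Then φ is ContDiffAt of order 2 at σ = p_k (i.e., twice continuously differentiable at p_k). -/

import Mathlib

open Set Filter Topology

private lemma piecewise_hasDerivAt {f g f' g' : ℝ → ℝ} {p : ℝ} {s : Set ℝ}
    (hf : ∀ x ∈ s, HasDerivAt f (f' x) x) (hg : ∀ x ∈ s, HasDerivAt g (g' x) x)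
    (h0 : f p = g p) (h1 : f' p = g' p) :
    ∀ x ∈ s, HasDerivAt (fun σ => if σ ≤ p then f σ else g σ)
      (if x ≤ p then f' x else g' x) x := by
  intro x hx
  rcases lt_trichotomy x p with hlt | heq | hgt
  · rw [if_pos hlt.le]
    refine (hf x hx).congr_of_eventuallyEq ?_
    filter_upwards [Iio_mem_nhds hlt] with σ hσ
    exact if_pos (le_of_lt hσ)
  · subst heq
    rw [if_pos le_rfl]
    have hIic : HasDerivWithinAt (fun σ => if σ ≤ x then f σ else g σ) (f' x) (Iic x) x := by
      refine ((hf x hx).hasDerivWithinAt).congr (fun σ hσ => if_pos hσ) (if_pos le_rfl)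
    have hIci : HasDerivWithinAt (fun σ => if σ ≤ x then f σ else g σ) (f' x) (Ici x) x := by
      rw [h1]
      refine ((hg x hx).hasDerivWithinAt).congr (fun σ hσ => ?_) ?_
      · rcases eq_or_lt_of_le (show x ≤ σ from hσ) with h | h
        · rw [if_pos h.ge, ← h, h0]
        · rw [if_neg (not_le.2 h)]
      · rw [if_pos le_rfl, h0]
    have hu := hIic.union hIci
    rw [Iic_union_Ici] at hu
    exact hasDerivWithinAt_univ.1 hu
  · rw [if_neg (not_le.2 hgt)]
    refine (hg x hx).congr_of_eventuallyEq ?_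
    filter_upwards [Ioi_mem_nhds hgt] with σ hσ
    exact if_neg (not_le.2 hσ)

private lemma piecewise_continuousAt {f g : ℝ → ℝ} {p : ℝ} {s : Set ℝ}
    (hf : ∀ x ∈ s, ContinuousAt f x) (hg : ∀ x ∈ s, ContinuousAt g x)
    (h0 : f p = g p) :
    ∀ x ∈ s, ContinuousAt (fun σ => if σ ≤ p then f σ else g σ) x := by
  intro x hx
  rcases lt_trichotomy x p with hlt | heq | hgt
  · refine (hf x hx).congr ?_
    filter_upwards [Iio_mem_nhds hlt] with σ hσ
    exact (if_pos (le_of_lt hσ)).symm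
  · subst heq
    have hIic : ContinuousWithinAt (fun σ => if σ ≤ x then f σ else g σ) (Iic x) x :=
      ((hf x hx).continuousWithinAt).congr (fun σ hσ => if_pos hσ) (if_pos le_rfl)
    have hIci : ContinuousWithinAt (fun σ => if σ ≤ x then f σ else g σ) (Ici x) x := by
      refine ((hg x hx).continuousWithinAt).congr (fun σ hσ => ?_) (by rw [if_pos le_rfl, h0])
      rcases eq_or_lt_of_le (show x ≤ σ from hσ) with h | h
      · rw [if_pos h.ge, ← h, h0]
      · rw [if_neg (not_le.2 h)]
    have hu := hIic.union hIci
    rw [Iic_union_Ici] at hu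
    exact (continuousWithinAt_univ _ _).1 hu
  · refine (hg x hx).congr ?_
    filter_upwards [Ioi_mem_nhds hgt] with σ hσ
    exact (if_neg (not_le.2 hσ)).symm

private lemma piecewise_contDiffAt_two {f g f1 g1 f2 g2 : ℝ → ℝ} {p : ℝ} {s : Set ℝ}
    (hs : IsOpen s) (hps : p ∈ s)
    (hf : ∀ x ∈ s, HasDerivAt f (f1 x) x) (hg : ∀ x ∈ s, HasDerivAt g (g1 x) x)
    (hf1 : ∀ x ∈ s, HasDerivAt f1 (f2 x) x) (hg1 : ∀ x ∈ s, HasDerivAt g1 (g2 x) x)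
    (hf2 : ∀ x ∈ s, ContinuousAt f2 x) (hg2 : ∀ x ∈ s, ContinuousAt g2 x)
    (h0 : f p = g p) (h1 : f1 p = g1 p) (h2 : f2 p = g2 p) :
    ContDiffAt ℝ 2 (fun σ => if σ ≤ p then f σ else g σ) p := by
  have k1 := piecewise_hasDerivAt hf hg h0 h1
  have k2 := piecewise_hasDerivAt hf1 hg1 h1 h2
  have k3 := piecewise_continuousAt hf2 hg2 h2
  have main : ContDiffOn ℝ 2 (fun σ => if σ ≤ p then f σ else g σ) s := by
    rw [show (2 : WithTop ℕ∞) = 1 + 1 by norm_num, contDiffOn_succ_iff_deriv_of_isOpen hs]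
    refine ⟨fun x hx => (k1 x hx).differentiableAt.differentiableWithinAt, by simp, ?_⟩
    refine ContDiffOn.congr ?_ (fun x hx => (k1 x hx).deriv)
    rw [show (1 : WithTop ℕ∞) = 0 + 1 by norm_num, contDiffOn_succ_iff_deriv_of_isOpen hs]
    refine ⟨fun x hx => (k2 x hx).differentiableAt.differentiableWithinAt, by simp, ?_⟩
    rw [contDiffOn_zero]
    exact ContinuousOn.congr (fun x hx => (k3 x hx).continuousWithinAt)
      (fun x hx => (k2 x hx).deriv)
  exact main.contDiffAt (hs.mem_nhds hps)

/-- The density function `φ` of the Lax-curve parametrisation: isentropic rarefaction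
branch for `σ ≤ p`, shock (Rankine–Hugoniot) branch for `σ > p`, based at density `ρ`
and pressure `p`, with `μ² = (γ−1)/(γ+1)`. -/
noncomputable def laxPhi (γ ρ p : ℝ) (σ : ℝ) : ℝ :=
  if σ ≤ p then
    ρ * (σ / p) ^ (1 / γ)
  else
    ρ * (σ + ((γ - 1) / (γ + 1)) * p) / (((γ - 1) / (γ + 1)) * σ + p)

/-- `φ` is twice continuously differentiable at the base pressure `σ = p_k`. -/
theorem laxPhi_contDiffAt_two
    (γ ρk pk : ℝ) (hγ : 1 < γ) (hρ : 0 < ρk) (hp : 0 < pk) :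
    ContDiffAt ℝ 2 (laxPhi γ ρk pk) pk := by
  have hγ0 : γ ≠ 0 := by intro h; rw [h] at hγ; linarith
  have hγ1 : γ + 1 ≠ 0 := by intro h; linarith
  have hpk : pk ≠ 0 := hp.ne'
  have hm0 : (0:ℝ) ≤ (γ - 1) / (γ + 1) := div_nonneg (by linarith) (by linarith)
  have hden : ∀ x ∈ Ioi (0:ℝ), (0:ℝ) < (γ - 1) / (γ + 1) * x + pk := fun x hx =>
    add_pos_of_nonneg_of_pos (mul_nonneg hm0 (le_of_lt hx)) hp
  -- rarefaction branch derivatives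
  have hf : ∀ x ∈ Ioi (0:ℝ), HasDerivAt (fun σ : ℝ => ρk * (σ / pk) ^ (1 / γ))
      (ρk / (γ * pk) * (x / pk) ^ (1 / γ - 1)) x := by
    intro x hx
    have hx0 : x / pk ≠ 0 := (div_pos hx hp).ne'
    have hdiv : HasDerivAt (fun σ : ℝ => σ / pk) (1 / pk) x := by
      simpa using (hasDerivAt_id x).div_const pk
    have h1 := (Real.hasDerivAt_rpow_const (p := 1 / γ) (Or.inl hx0)).comp x hdiv
    have h2 : HasDerivAt (fun σ : ℝ => ρk * (σ / pk) ^ (1 / γ))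
        (ρk * (1 / γ * (x / pk) ^ (1 / γ - 1) * (1 / pk))) x := h1.const_mul ρk
    convert h2 using 1
    field_simp
  have hf1 : ∀ x ∈ Ioi (0:ℝ), HasDerivAt (fun σ : ℝ => ρk / (γ * pk) * (σ / pk) ^ (1 / γ - 1))
      (ρk / (γ * pk) * ((1 / γ - 1) * (x / pk) ^ (1 / γ - 2) * (1 / pk))) x := by
    intro x hx
    have hx0 : x / pk ≠ 0 := (div_pos hx hp).ne'
    have hdiv : HasDerivAt (fun σ : ℝ => σ / pk) (1 / pk) x := by
      simpa using (hasDerivAt_id x).div_const pk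
    have h1 := (Real.hasDerivAt_rpow_const (p := 1 / γ - 1) (Or.inl hx0)).comp x hdiv
    have h2 : HasDerivAt (fun σ : ℝ => ρk / (γ * pk) * (σ / pk) ^ (1 / γ - 1))
        (ρk / (γ * pk) * (1 / γ - 1) * (x / pk) ^ (1 / γ - 1 - 1) * (1 / pk)) x := by
      have := h1.const_mul (ρk / (γ * pk))
      exact this.congr_deriv (by ring)
    rw [show (1 / γ - 1 - 1 : ℝ) = 1 / γ - 2 by ring] at h2
    convert h2 using 1
    ring
  have hf2 : ∀ x ∈ Ioi (0:ℝ), ContinuousAt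
      (fun σ : ℝ => ρk / (γ * pk) * ((1 / γ - 1) * (σ / pk) ^ (1 / γ - 2) * (1 / pk))) x := by
    intro x hx
    have hx0 : x / pk ≠ 0 := (div_pos hx hp).ne'
    have hc : ContinuousAt (fun σ : ℝ => (σ / pk) ^ (1 / γ - 2)) x :=
      ContinuousAt.rpow_const (continuousAt_id.div_const pk) (Or.inl hx0)
    exact (((hc.const_mul _).mul continuousAt_const).const_mul _)
  -- shock branch derivatives
  have hg : ∀ x ∈ Ioi (0:ℝ), HasDerivAt
      (fun σ : ℝ => ρk * (σ + (γ - 1) / (γ + 1) * pk) / ((γ - 1) / (γ + 1) * σ + pk))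
      (ρk * pk * (1 - ((γ - 1) / (γ + 1)) ^ 2) / ((γ - 1) / (γ + 1) * x + pk) ^ 2) x := by
    intro x hx
    have hdne : (γ - 1) / (γ + 1) * x + pk ≠ 0 := (hden x hx).ne'
    have hN : HasDerivAt (fun σ : ℝ => ρk * (σ + (γ - 1) / (γ + 1) * pk)) (ρk * 1) x :=
      ((hasDerivAt_id x).add_const _).const_mul ρk
    have hD : HasDerivAt (fun σ : ℝ => (γ - 1) / (γ + 1) * σ + pk) ((γ - 1) / (γ + 1) * 1) x :=
      ((hasDerivAt_id x).const_mul _).add_const pk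
    have h : HasDerivAt
        (fun σ : ℝ => ρk * (σ + (γ - 1) / (γ + 1) * pk) / ((γ - 1) / (γ + 1) * σ + pk))
        ((ρk * 1 * ((γ - 1) / (γ + 1) * x + pk) -
          ρk * (x + (γ - 1) / (γ + 1) * pk) * ((γ - 1) / (γ + 1) * 1)) /
          ((γ - 1) / (γ + 1) * x + pk) ^ 2) x := hN.div hD hdne
    convert h using 1
    rw [div_eq_div_iff (pow_ne_zero 2 hdne) (pow_ne_zero 2 hdne)]
    field_simp
    ring
  have hg1 : ∀ x ∈ Ioi (0:ℝ), HasDerivAt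
      (fun σ : ℝ => ρk * pk * (1 - ((γ - 1) / (γ + 1)) ^ 2) / ((γ - 1) / (γ + 1) * σ + pk) ^ 2)
      (-(2 * ((γ - 1) / (γ + 1))) * (ρk * pk * (1 - ((γ - 1) / (γ + 1)) ^ 2)) /
        ((γ - 1) / (γ + 1) * x + pk) ^ 3) x := by
    intro x hx
    have hdpos := hden x hx
    have hdne : (γ - 1) / (γ + 1) * x + pk ≠ 0 := hdpos.ne'
    have hD : HasDerivAt (fun σ : ℝ => (γ - 1) / (γ + 1) * σ + pk) ((γ - 1) / (γ + 1) * 1) x :=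
      ((hasDerivAt_id x).const_mul _).add_const pk
    have hD2 := hD.pow 2
    have h := (hasDerivAt_const x (ρk * pk * (1 - ((γ - 1) / (γ + 1)) ^ 2))).div hD2
      (pow_ne_zero 2 hdne)
    refine h.congr_deriv (Eq.symm ?_)
    simp only [Pi.pow_apply]
    rw [div_eq_div_iff (pow_ne_zero 3 hdne) (by positivity)]
    push_cast
    ring
  have hg2 : ∀ x ∈ Ioi (0:ℝ), ContinuousAt
      (fun σ : ℝ => -(2 * ((γ - 1) / (γ + 1))) * (ρk * pk * (1 - ((γ - 1) / (γ + 1)) ^ 2)) /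
        ((γ - 1) / (γ + 1) * σ + pk) ^ 3) x := by
    intro x hx
    have hdne : ((γ - 1) / (γ + 1) * x + pk) ^ 3 ≠ 0 := pow_ne_zero 3 (hden x hx).ne'
    exact ContinuousAt.div continuousAt_const
      ((((continuousAt_id.const_mul _).add continuousAt_const).pow 3)) hdne
  -- matching at the junction
  have hdpk : (γ - 1) / (γ + 1) * pk + pk ≠ 0 := (hden pk (mem_Ioi.2 hp)).ne'
  have h0 : ρk * (pk / pk) ^ (1 / γ)
      = ρk * (pk + (γ - 1) / (γ + 1) * pk) / ((γ - 1) / (γ + 1) * pk + pk) := by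
    rw [div_self hpk, Real.one_rpow, eq_div_iff hdpk]
    ring
  have h1 : ρk / (γ * pk) * (pk / pk) ^ (1 / γ - 1)
      = ρk * pk * (1 - ((γ - 1) / (γ + 1)) ^ 2) / ((γ - 1) / (γ + 1) * pk + pk) ^ 2 := by
    rw [div_self hpk, Real.one_rpow, mul_one, div_eq_div_iff (by positivity) (pow_ne_zero 2 hdpk)]
    field_simp
    ring
  have h2 : ρk / (γ * pk) * ((1 / γ - 1) * (pk / pk) ^ (1 / γ - 2) * (1 / pk))
      = -(2 * ((γ - 1) / (γ + 1))) * (ρk * pk * (1 - ((γ - 1) / (γ + 1)) ^ 2)) /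
        ((γ - 1) / (γ + 1) * pk + pk) ^ 3 := by
    rw [div_self hpk, Real.one_rpow]
    rw [show ρk / (γ * pk) * ((1 / γ - 1) * 1 * (1 / pk)) = (ρk * (1 - γ)) / (γ ^ 2 * pk ^ 2) by
      field_simp]
    rw [div_eq_div_iff (by positivity) (pow_ne_zero 3 hdpk)]
    field_simp
    ring
  exact piecewise_contDiffAt_two isOpen_Ioi (mem_Ioi.2 hp) hf hg hf1 hg1 hf2 hg2 h0 h1 h2
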